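/- For every χ > 0, −φ(χ) + 2φ(0)Φ(χ) − χΦ(χ) < 0, where φ(0) = 1/√(2π). -/
import Mathlib

open MeasureTheory

/-- The standard normal probability density function. -/
noncomputable def stdGaussianPDF (x : ℝ) : ℝ :=
  Real.exp (-x ^ 2 / 2) / Real.sqrt (2 * Real.pi)

/-- The standard normal cumulative distribution function. -/
noncomputable def stdGaussianCDF (x : ℝ) : ℝ :=
  ∫ t in Set.Iic x, stdGaussianPDF t

lemma stdGaussianPDF_eq (x : ℝ) :
    stdGaussianPDF x = Real.exp (-(1/2) * x ^ 2) / Real.sqrt (2 * Real.pi) := by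
  unfold stdGaussianPDF; ring_nf

lemma integrable_stdGaussianPDF : Integrable stdGaussianPDF := by
  have h := (integrable_exp_neg_mul_sq (by norm_num : (0:ℝ) < 1/2)).div_const
    (Real.sqrt (2 * Real.pi))
  exact h.congr (by filter_upwards with x using (stdGaussianPDF_eq x).symm)

lemma integral_stdGaussianPDF : ∫ x, stdGaussianPDF x = 1 := by
  have hs : (0:ℝ) < Real.sqrt (2 * Real.pi) :=
    Real.sqrt_pos.2 (by positivity)
  have h : ∫ x : ℝ, Real.exp (-(1/2) * x ^ 2) = Real.sqrt (2 * Real.pi) := by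
    rw [integral_gaussian]
    rw [show Real.pi / (1/2) = 2 * Real.pi by ring]
  calc ∫ x, stdGaussianPDF x
      = ∫ x : ℝ, Real.exp (-(1/2) * x ^ 2) / Real.sqrt (2 * Real.pi) := by
        simp_rw [stdGaussianPDF_eq]
    _ = (∫ x : ℝ, Real.exp (-(1/2) * x ^ 2)) / Real.sqrt (2 * Real.pi) :=
        integral_div _ _
    _ = 1 := by rw [h]; field_simp

lemma stdGaussianCDF_zero : stdGaussianCDF 0 = 1 / 2 := by
  have heven : stdGaussianCDF 0 = ∫ x in Set.Ioi (0:ℝ), stdGaussianPDF x := by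
    unfold stdGaussianCDF
    rw [show (0:ℝ) = -0 by norm_num] at *
    rw [← integral_comp_neg_Iic 0 stdGaussianPDF]
    simp [stdGaussianPDF]
  have hsplit : stdGaussianCDF 0 + ∫ x in Set.Ioi (0:ℝ), stdGaussianPDF x = 1 := by
    unfold stdGaussianCDF
    rw [← integral_stdGaussianPDF, ← setIntegral_union (by simp [Set.disjoint_left])
      measurableSet_Ioi integrable_stdGaussianPDF.integrableOn
      integrable_stdGaussianPDF.integrableOn, Set.Iic_union_Ioi,
      Measure.restrict_univ]
  linarith [heven ▸ hsplit]

lemma stdGaussianCDF_eq (χ : ℝ) :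
    stdGaussianCDF χ = 1 / 2 + ∫ t in (0:ℝ)..χ, stdGaussianPDF t := by
  have h := intervalIntegral.integral_Iic_sub_Iic
    (integrable_stdGaussianPDF.integrableOn (s := Set.Iic 0))
    (integrable_stdGaussianPDF.integrableOn (s := Set.Iic χ))
  have h0 := stdGaussianCDF_zero
  unfold stdGaussianCDF at *
  linarith

/-- For every `χ > 0`, `−φ(χ) + 2φ(0)Φ(χ) − χΦ(χ) < 0`, where `φ(0) = 1/√(2π)`. -/
theorem g1_HT_neg (χ : ℝ) (hχ : 0 < χ) :
    -stdGaussianPDF χ + 2 * (1 / Real.sqrt (2 * Real.pi)) * stdGaussianCDF χ -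
      χ * stdGaussianCDF χ < 0 := by
  set s := Real.sqrt (2 * Real.pi) with hs_def
  have hpi := Real.pi_gt_three
  have hs : (0:ℝ) < s := Real.sqrt_pos.2 (by positivity)
  have hs2 : s ^ 2 = 2 * Real.pi := Real.sq_sqrt (by positivity)
  -- bounds on the pdf
  have hpdf_pos : ∀ x : ℝ, 0 < stdGaussianPDF x := fun x => by
    unfold stdGaussianPDF; positivity
  have hpdf_le : ∀ x : ℝ, stdGaussianPDF x ≤ 1 / s := fun x => by
    unfold stdGaussianPDF
    gcongr
    exact Real.exp_le_one_iff.mpr (by nlinarith [sq_nonneg x])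
  have hpdf_lb : (1 - χ ^ 2 / 2) / s ≤ stdGaussianPDF χ := by
    unfold stdGaussianPDF
    gcongr
    linarith [Real.add_one_le_exp (-χ ^ 2 / 2)]
  -- bounds on the cdf
  have hcdf_ub : stdGaussianCDF χ ≤ 1 / 2 + χ * (1 / s) := by
    rw [stdGaussianCDF_eq]
    have : ∫ t in (0:ℝ)..χ, stdGaussianPDF t ≤ ∫ _t in (0:ℝ)..χ, 1 / s := by
      apply intervalIntegral.integral_mono_on hχ.le
        (integrable_stdGaussianPDF.intervalIntegrable)
        (intervalIntegrable_const)
        (fun x _ => hpdf_le x)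
    rw [intervalIntegral.integral_const] at this
    simp only [smul_eq_mul] at this
    linarith
  have hcdf_lb : (1:ℝ) / 2 ≤ stdGaussianCDF χ := by
    rw [stdGaussianCDF_eq]
    have : (0:ℝ) ≤ ∫ t in (0:ℝ)..χ, stdGaussianPDF t :=
      intervalIntegral.integral_nonneg hχ.le (fun x _ => (hpdf_pos x).le)
    linarith
  have h1s : 2 / s / s < 1 / 2 := by
    rw [show 2 / s / s = 2 / s ^ 2 by ring, hs2,
      div_lt_div_iff₀ (by positivity) (by norm_num)]
    nlinarith
  set Φ := stdGaussianCDF χ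
  set φχ := stdGaussianPDF χ
  have hφ := hpdf_pos χ
  rcases le_or_gt (2 / s) χ with h | h
  · have : (2 * (1/s) - χ) * Φ ≤ 0 := by
      apply mul_nonpos_of_nonpos_of_nonneg
      · have : 2 * (1/s) = 2 / s := by ring
        linarith [this ▸ h]
      · linarith
    linarith
  · have key : (2 * (1/s) - χ) * Φ ≤ (2 * (1/s) - χ) * (1/2 + χ * (1/s)) := by
      apply mul_le_mul_of_nonneg_left hcdf_ub
      have : 2 * (1/s) = 2 / s := by ring
      linarith [this ▸ h.le]
    have hexp : (2 * (1/s) - χ) * (1/2 + χ * (1/s)) < φχ := by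
      have h2 : (2 * (1/s) - χ) * (1/2 + χ * (1/s)) = 1/s + 2*χ/s/s - χ/2 - χ^2/s := by
        field_simp; ring
      have h3 : (1 - χ ^ 2 / 2) / s = 1/s - χ^2/s/2 := by ring
      rw [h2]
      have hmul := mul_lt_mul_of_pos_left h1s hχ
      have hq : (0:ℝ) < χ^2/s/2 := by positivity
      have key2 : 1/s + 2*χ/s/s - χ/2 - χ^2/s < 1/s - χ^2/s/2 := by
        have e1 : 2*χ/s/s = χ * (2 / s / s) := by ring
        have e2 : χ^2/s = χ^2/s/2 + χ^2/s/2 := by ring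
        linarith
      linarith [hpdf_lb, h3, key2]
    linarith [key, hexp]
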